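/- Let d ≥ 2 be an integer and let n_Z be a d×d real symmetric positive semidefinite matrix with 0 < rank(n_Z) < d; set n := (0, 0, n_Z) ∈ E and F_s := {(x, 0, Z) ∈ E : x ≤ 0, Z positive semidefinite, tr(Z·n_Z) = 0}. For integers k ≥ 1 define w^k := (−1, 1/k, 0) ∈ E (last component the zero matrix). Then ⟨w^k, n⟩ = 0, dist(w^k, F_s) = 1/k, 0 < dist(w^k, K_logdet) ≤ √d/(k·e^{k/d}), and liminf_{k→∞} dist(w^k, F_s)/g_log(dist(w^k, K_logdet)) ≥ 1/(2d). (Hence the residual function g_log in the log-type error bound for F_s with n_y = 0 is tight.) -/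

import Mathlib

set_option maxHeartbeats 1000000

open Matrix Filter

noncomputable section

/-- The space `E = ℝ × ℝ × S^d` (matrix parts are required to be symmetric where relevant). -/
abbrev E (d : ℕ) : Type := ℝ × ℝ × Matrix (Fin d) (Fin d) ℝ

/-- The inner product `⟨(x,y,Z),(x',y',Z')⟩ = x x' + y y' + tr (Z Z')` on `E`. -/
def ip {d : ℕ} (p q : E d) : ℝ := p.1 * q.1 + p.2.1 * q.2.1 + (p.2.2 * q.2.2).trace

/-- The induced norm `‖(x,y,Z)‖ = sqrt (x² + y² + tr (Z²))` on `E`. -/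
def nrm {d : ℕ} (p : E d) : ℝ := Real.sqrt (p.1 ^ 2 + p.2.1 ^ 2 + (p.2.2 * p.2.2).trace)

/-- Distance from a point to a set: `dist(p, S) = inf {‖p - s‖ : s ∈ S}`. -/
def sdist {d : ℕ} (p : E d) (S : Set (E d)) : ℝ := sInf {r : ℝ | ∃ s ∈ S, r = nrm (p - s)}

/-- The log-determinant cone `K_logdet`. -/
def Klogdet (d : ℕ) : Set (E d) :=
  {p | (0 < p.2.1 ∧ p.2.2.PosDef ∧ p.1 ≤ p.2.1 * Real.log ((p.2.1⁻¹ • p.2.2).det))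
    ∨ (p.1 ≤ 0 ∧ p.2.1 = 0 ∧ p.2.2.PosSemidef)}

/-- The log-type residual function `g_log`. -/
def glog (t : ℝ) : ℝ :=
  if t = 0 then 0
  else if t ≤ Real.exp (-2) then -1 / Real.log t
  else 1 / 4 + Real.exp 2 / 4 * t

/-- The face `F_s = ℝ₋ × {0} × (S₊ᵈ ∩ {n_Z}^⊥)`. -/
def Fs (d : ℕ) (nZ : Matrix (Fin d) (Fin d) ℝ) : Set (E d) :=
  {p | p.1 ≤ 0 ∧ p.2.1 = 0 ∧ p.2.2.PosSemidef ∧ (p.2.2 * nZ).trace = 0}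

/-- The sequence `w^k = (-1, 1/k, 0)`. -/
def wtight (d : ℕ) (k : ℕ) : E d := (-1, 1 / (k : ℝ), (0 : Matrix (Fin d) (Fin d) ℝ))

/- ### Auxiliary lemmas -/

lemma trace_mul_self_eq {d : ℕ} (Z : Matrix (Fin d) (Fin d) ℝ) (hZ : Z.IsHermitian) :
    (Z * Z).trace = ∑ i, ∑ j, Z i j ^ 2 := by
  simp only [Matrix.trace, Matrix.diag, Matrix.mul_apply]
  refine Finset.sum_congr rfl fun i _ => Finset.sum_congr rfl fun j _ => ?_
  have h := hZ.apply i j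
  simp only [Matrix.conjTranspose_apply, RCLike.star_def, starRingEnd_apply, star_trivial] at h
  rw [← h]; ring

lemma trace_mul_self_nonneg {d : ℕ} (Z : Matrix (Fin d) (Fin d) ℝ) (hZ : Z.IsHermitian) :
    0 ≤ (Z * Z).trace := by
  rw [trace_mul_self_eq Z hZ]; positivity

lemma trace_eq_sum_eigs {d : ℕ} {Z : Matrix (Fin d) (Fin d) ℝ} (hZ : Z.IsHermitian) :
    Z.trace = ∑ i, hZ.eigenvalues i := by
  simpa using hZ.trace_eq_sum_eigenvalues

lemma nrm_nonneg {d : ℕ} (p : E d) : 0 ≤ nrm p := Real.sqrt_nonneg _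

lemma sdist_le {d : ℕ} {p s : E d} {S : Set (E d)} (hs : s ∈ S) : sdist p S ≤ nrm (p - s) := by
  refine csInf_le ?_ ⟨s, hs, rfl⟩
  exact ⟨0, by rintro r ⟨t, _, rfl⟩; exact nrm_nonneg _⟩

lemma le_sdist {d : ℕ} {p : E d} {S : Set (E d)} {c : ℝ} (hne : S.Nonempty)
    (h : ∀ s ∈ S, c ≤ nrm (p - s)) : c ≤ sdist p S := by
  refine le_csInf ⟨nrm (p - hne.choose), hne.choose, hne.choose_spec, rfl⟩ ?_
  rintro r ⟨t, ht, rfl⟩; exact h t ht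

lemma log_neg_of_le_exp {t : ℝ} (h0 : 0 < t) (h : t ≤ Real.exp (-2)) : Real.log t ≤ -2 := by
  calc Real.log t ≤ Real.log (Real.exp (-2)) := Real.log_le_log h0 h
    _ = -2 := Real.log_exp _

lemma glog_eq {t : ℝ} (h0 : 0 < t) (h : t ≤ Real.exp (-2)) : glog t = 1 / (-Real.log t) := by
  rw [glog, if_neg h0.ne', if_pos h, neg_div, div_neg]

lemma glog_eq' {t : ℝ} (ht : ¬ t ≤ Real.exp (-2)) : glog t = 1 / 4 + Real.exp 2 / 4 * t := by
  push_neg at ht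
  have h0 : t ≠ 0 := (lt_trans (Real.exp_pos _) ht).ne'
  rw [glog, if_neg h0, if_neg (not_le.mpr ht)]

lemma glog_pos {t : ℝ} (h0 : 0 < t) : 0 < glog t := by
  by_cases h : t ≤ Real.exp (-2)
  · rw [glog_eq h0 h]
    have h2 := log_neg_of_le_exp h0 h
    have h3 : 0 < -Real.log t := by linarith
    positivity
  · rw [glog_eq' h]
    push_neg at h
    have : 0 < Real.exp 2 / 4 * t := by positivity
    linarith

lemma glog_mono {a b : ℝ} (h0 : 0 < a) (hab : a ≤ b) : glog a ≤ glog b := by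
  have hb0 : 0 < b := lt_of_lt_of_le h0 hab
  by_cases hb : b ≤ Real.exp (-2)
  · have ha : a ≤ Real.exp (-2) := le_trans hab hb
    rw [glog_eq h0 ha, glog_eq hb0 hb]
    have la := log_neg_of_le_exp h0 ha
    have lb := log_neg_of_le_exp hb0 hb
    have : Real.log a ≤ Real.log b := Real.log_le_log h0 hab
    apply one_div_le_one_div_of_le <;> linarith
  · rw [glog_eq' hb]
    push_neg at hb
    by_cases ha : a ≤ Real.exp (-2)
    · rw [glog_eq h0 ha]
      have la := log_neg_of_le_exp h0 ha
      have h1 : (1:ℝ) / (-Real.log a) ≤ 1 / 2 := by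
        apply one_div_le_one_div_of_le <;> linarith
      have h2 : (1:ℝ)/4 ≤ Real.exp 2 / 4 * b := by
        have : Real.exp (-2) * Real.exp 2 = 1 := by
          rw [← Real.exp_add]; norm_num
        nlinarith [Real.exp_pos (2:ℝ), hb.le]
      linarith
    · rw [glog_eq' ha]
      push_neg at ha
      have : Real.exp 2 / 4 * a ≤ Real.exp 2 / 4 * b := by
        have := Real.exp_pos (2:ℝ); nlinarith
      linarith

lemma klogdet_lb (d k : ℕ) (hd : 2 ≤ d) (hk : 1 ≤ k) (s : E d) (hs : s ∈ Klogdet d) :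
    Real.exp (-(3 * (k:ℝ))) / (k * d) ≤ nrm (wtight d k - s) := by
  obtain ⟨x, y, Z⟩ := s
  have hk1 : (1:ℝ) ≤ (k:ℝ) := by exact_mod_cast hk
  have hd2 : (2:ℝ) ≤ (d:ℝ) := by exact_mod_cast hd
  have hkpos : (0:ℝ) < k := by linarith
  have hdpos : (0:ℝ) < d := by linarith
  set ε : ℝ := Real.exp (-(3 * (k:ℝ))) / (k * d) with hε
  have hε0 : 0 < ε := by positivity
  have hexp1 : Real.exp (-(3 * (k:ℝ))) ≤ 1 := Real.exp_le_one_iff.mpr (by linarith)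
  have hεk : ε ≤ 1 / (2 * k) := by
    rw [hε, div_le_div_iff₀ (by positivity) (by positivity)]
    nlinarith
  by_contra hcon
  push_neg at hcon
  have hZh : Z.IsHermitian := by
    rcases hs with ⟨_, hpd, _⟩ | ⟨_, _, hpsd⟩
    · exact hpd.1
    · exact hpsd.1
  have hw : nrm (wtight d k - (x, y, Z)) =
      Real.sqrt ((-1 - x)^2 + (1/(k:ℝ) - y)^2 + (Z * Z).trace) := by
    simp only [nrm, wtight, Prod.mk_sub_mk, zero_sub, neg_mul_neg]
  have htrZZ : 0 ≤ (Z * Z).trace := trace_mul_self_nonneg Z hZh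
  rw [hw] at hcon
  have hS : (-1 - x)^2 + (1/(k:ℝ) - y)^2 + (Z * Z).trace < ε^2 := by
    have := (Real.sqrt_lt' hε0).mp hcon
    linarith
  have hxb : (-1 - x)^2 < ε^2 := by nlinarith [sq_nonneg (1/(k:ℝ) - y)]
  have hyb : (1/(k:ℝ) - y)^2 < ε^2 := by nlinarith [sq_nonneg (-1 - x)]
  have hZb : (Z * Z).trace < ε^2 := by nlinarith [sq_nonneg (-1 - x), sq_nonneg (1/(k:ℝ) - y)]
  have hxlow : -1 - x < ε := by nlinarith [sq_nonneg (-1 - x - ε)]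
  have hydiff : 1/(k:ℝ) - y < ε := by nlinarith [sq_nonneg (1/(k:ℝ) - y - ε)]
  have hy2 : 1 / (2 * (k:ℝ)) ≤ y := by
    have : 1/(k:ℝ) - y < 1/(2*k) := lt_of_lt_of_le hydiff hεk
    have h2 : 1/(k:ℝ) - 1/(2*k) = 1/(2*k) := by field_simp; ring
    linarith
  rcases hs with ⟨hy, hZpd, hx⟩ | ⟨_, hy0, _⟩
  swap
  · simp only at hy0
    rw [hy0] at hy2
    have : (0:ℝ) < 1 / (2*(k:ℝ)) := by positivity
    linarith
  simp only at hy hx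
  set trZ := Z.trace with htrZ
  have htr_sq : trZ^2 ≤ (d:ℝ) * (Z * Z).trace := by
    have h1 : (Z * Z).trace = ∑ i, ∑ j, Z i j ^ 2 := trace_mul_self_eq Z hZh
    have h2 : ∑ i, Z i i ^ 2 ≤ ∑ i, ∑ j, Z i j ^ 2 := by
      apply Finset.sum_le_sum
      intro i _
      exact Finset.single_le_sum (fun j _ => sq_nonneg (Z i j)) (Finset.mem_univ i)
    have h3 := sq_sum_le_card_mul_sum_sq (s := (Finset.univ : Finset (Fin d))) (f := fun i => Z i i)
    have h4 : trZ = ∑ i, Z i i := by simp [htrZ, Matrix.trace, Matrix.diag]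
    rw [Finset.card_univ, Fintype.card_fin] at h3
    rw [h4, h1]
    nlinarith
  have htrZle : trZ ≤ Real.sqrt d * ε := by
    have h5 : trZ ≤ Real.sqrt (d * ε^2) := by
      calc trZ ≤ |trZ| := le_abs_self _
        _ = Real.sqrt (trZ^2) := (Real.sqrt_sq_eq_abs _).symm
        _ ≤ Real.sqrt ((d:ℝ) * ε^2) := Real.sqrt_le_sqrt (by nlinarith)
    rwa [Real.sqrt_mul hdpos.le, Real.sqrt_sq hε0.le] at h5
  have heig := hZpd.eigenvalues_pos
  have heigsum : trZ = ∑ i, hZpd.1.eigenvalues i := trace_eq_sum_eigs hZpd.1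
  have hdetle : Z.det ≤ (Real.sqrt d * ε)^d := by
    have h6 : Z.det = ∏ i, hZpd.1.eigenvalues i := by
      have := hZpd.1.det_eq_prod_eigenvalues
      simpa using this
    rw [h6]
    calc ∏ i, hZpd.1.eigenvalues i ≤ ∏ _i : Fin d, (Real.sqrt d * ε) := by
          apply Finset.prod_le_prod (fun i _ => (heig i).le)
          intro i _
          calc hZpd.1.eigenvalues i ≤ ∑ j, hZpd.1.eigenvalues j := by
                apply Finset.single_le_sum (fun j _ => (heig j).le) (Finset.mem_univ i)
            _ = trZ := heigsum.symm
            _ ≤ Real.sqrt d * ε := htrZle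
      _ = (Real.sqrt d * ε)^d := by rw [Finset.prod_const, Finset.card_univ, Fintype.card_fin]
  have hyinv : y⁻¹ ≤ 2 * k := by
    rw [inv_le_comm₀ hy (by positivity)]
    calc (2 * (k:ℝ))⁻¹ = 1 / (2 * k) := by ring
      _ ≤ y := hy2
  have hsq : Real.sqrt d ≤ (d:ℝ) := by
    nlinarith [Real.sq_sqrt hdpos.le, Real.sqrt_nonneg (d:ℝ)]
  have hkey : 2 * (k:ℝ) * (Real.sqrt d * ε) ≤ Real.exp (-(2*(k:ℝ))) := by
    have h7 : 2 * (k:ℝ) * (Real.sqrt d * ε) ≤ 2 * k * ((d:ℝ) * ε) :=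
      mul_le_mul_of_nonneg_left (mul_le_mul_of_nonneg_right hsq hε0.le) (by positivity)
    have h8 : 2 * (k:ℝ) * ((d:ℝ) * ε) = 2 * Real.exp (-(3*(k:ℝ))) := by
      rw [hε]; field_simp
    have h9 : (2:ℝ) ≤ Real.exp 1 := by
      have := Real.add_one_le_exp (1:ℝ); linarith
    have h10 : 2 * Real.exp (-(3*(k:ℝ))) ≤ Real.exp 1 * Real.exp (-(3*(k:ℝ))) := by
      nlinarith [Real.exp_pos (-(3*(k:ℝ)))]
    have h11 : Real.exp 1 * Real.exp (-(3*(k:ℝ))) = Real.exp (1 - 3*k) := by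
      rw [← Real.exp_add]; ring_nf
    have h12 : Real.exp (1 - 3*(k:ℝ)) ≤ Real.exp (-(2*(k:ℝ))) :=
      Real.exp_le_exp.mpr (by linarith)
    linarith
  have hdet2 : (y⁻¹ • Z).det = y⁻¹ ^ d * Z.det := by
    rw [Matrix.det_smul, Fintype.card_fin]
  have hdetpos : 0 < (y⁻¹ • Z).det := by
    rw [hdet2]
    exact mul_pos (pow_pos (inv_pos.mpr hy) d) hZpd.det_pos
  have hbound : (y⁻¹ • Z).det ≤ Real.exp (-(2 * (k:ℝ) * d)) := by
    rw [hdet2]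
    calc y⁻¹ ^ d * Z.det ≤ (2*(k:ℝ))^d * (Real.sqrt d * ε)^d := by
          apply mul_le_mul (pow_le_pow_left₀ (inv_pos.mpr hy).le hyinv d) hdetle
            hZpd.det_pos.le (by positivity)
      _ = (2*(k:ℝ) * (Real.sqrt d * ε))^d := (mul_pow _ _ _).symm
      _ ≤ (Real.exp (-(2*(k:ℝ))))^d := by
          apply pow_le_pow_left₀ (by positivity) hkey
      _ = Real.exp (-(2 * (k:ℝ) * d)) := by
          rw [← Real.exp_nat_mul]; congr 1; ring
  have hlog : Real.log ((y⁻¹ • Z).det) ≤ -(2 * (k:ℝ) * d) := by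
    calc Real.log ((y⁻¹ • Z).det) ≤ Real.log (Real.exp (-(2 * (k:ℝ) * d))) :=
          Real.log_le_log hdetpos hbound
      _ = -(2 * (k:ℝ) * d) := Real.log_exp _
  have hfin : x ≤ -(d:ℝ) := by
    calc x ≤ y * Real.log ((y⁻¹ • Z).det) := hx
      _ ≤ y * (-(2 * (k:ℝ) * d)) := mul_le_mul_of_nonneg_left hlog hy.le
      _ ≤ (1/(2*(k:ℝ))) * (-(2 * (k:ℝ) * d)) := by
          exact mul_le_mul_of_nonpos_right hy2 (by nlinarith)
      _ = -(d:ℝ) := by field_simp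
  have hεhalf : ε ≤ 1/2 := by
    calc ε ≤ 1/(2*(k:ℝ)) := hεk
      _ ≤ 1/2 := by apply div_le_div_of_nonneg_left <;> linarith
  linarith

lemma fs_nonempty (d : ℕ) (nZ : Matrix (Fin d) (Fin d) ℝ) :
    (((-1 : ℝ), (0:ℝ), (0 : Matrix (Fin d) (Fin d) ℝ)) : E d) ∈ Fs d nZ :=
  ⟨by norm_num, rfl, Matrix.PosSemidef.zero, by simp⟩

lemma klogdet_nonempty (d : ℕ) :
    (((0 : ℝ), (0:ℝ), (0 : Matrix (Fin d) (Fin d) ℝ)) : E d) ∈ Klogdet d :=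
  Or.inr ⟨le_refl _, rfl, Matrix.PosSemidef.zero⟩

lemma sdist_fs (d k : ℕ) (hk : 1 ≤ k) (nZ : Matrix (Fin d) (Fin d) ℝ) :
    sdist (wtight d k) (Fs d nZ) = 1 / k := by
  have hk1 : (1:ℝ) ≤ (k:ℝ) := by exact_mod_cast hk
  have hkpos : (0:ℝ) < k := by linarith
  apply le_antisymm
  · have heq : wtight d k - (((-1 : ℝ), (0:ℝ), (0 : Matrix (Fin d) (Fin d) ℝ)) : E d)
        = ((0:ℝ), 1/(k:ℝ), (0 : Matrix (Fin d) (Fin d) ℝ)) := by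
      simp [wtight, Prod.ext_iff]
    have hnrm : nrm (((0:ℝ), 1/(k:ℝ), (0 : Matrix (Fin d) (Fin d) ℝ)) : E d) = 1/(k:ℝ) := by
      simp only [nrm]
      have h0 : ((0 : Matrix (Fin d) (Fin d) ℝ) * 0).trace = 0 := by simp
      rw [h0]
      have h1 : (0:ℝ) ^ 2 + (1/(k:ℝ)) ^ 2 + 0 = (1/(k:ℝ))^2 := by ring
      rw [h1]
      exact Real.sqrt_sq (by positivity)
    calc sdist (wtight d k) (Fs d nZ) ≤ nrm (wtight d k - (((-1 : ℝ), (0:ℝ), 0) : E d)) :=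
          sdist_le (fs_nonempty d nZ)
      _ = 1/(k:ℝ) := by rw [heq, hnrm]
  · apply le_sdist ⟨_, fs_nonempty d nZ⟩
    rintro ⟨x, y, Z⟩ ⟨hx, hy, hpsd, -⟩
    simp only at hx hy hpsd
    subst hy
    have hw : nrm (wtight d k - (x, 0, Z)) =
        Real.sqrt ((-1 - x)^2 + (1/(k:ℝ))^2 + (Z * Z).trace) := by
      simp only [nrm, wtight, Prod.mk_sub_mk, zero_sub, neg_mul_neg, sub_zero]
    rw [hw]
    have htr : 0 ≤ (Z * Z).trace := trace_mul_self_nonneg Z hpsd.1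
    calc 1/(k:ℝ) = Real.sqrt ((1/(k:ℝ))^2) := (Real.sqrt_sq (by positivity)).symm
      _ ≤ Real.sqrt ((-1 - x)^2 + (1/(k:ℝ))^2 + (Z * Z).trace) :=
          Real.sqrt_le_sqrt (by nlinarith [sq_nonneg (-1 - x)])

lemma sdist_klogdet_ub (d k : ℕ) (hd : 2 ≤ d) (hk : 1 ≤ k) :
    sdist (wtight d k) (Klogdet d) ≤ Real.sqrt d / (k * Real.exp (k / d)) := by
  have hk1 : (1:ℝ) ≤ (k:ℝ) := by exact_mod_cast hk
  have hd2 : (2:ℝ) ≤ (d:ℝ) := by exact_mod_cast hd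
  have hkpos : (0:ℝ) < k := by linarith
  have hdpos : (0:ℝ) < d := by linarith
  set c : ℝ := Real.exp (-(k:ℝ)/d) / k with hc
  have hcpos : 0 < c := by positivity
  set q : E d := ((-1 : ℝ), 1/(k:ℝ), c • (1 : Matrix (Fin d) (Fin d) ℝ)) with hq
  have hqmem : q ∈ Klogdet d := by
    left
    refine ⟨by positivity, ?_, ?_⟩
    · show (c • (1 : Matrix (Fin d) (Fin d) ℝ)).PosDef
      rw [Matrix.smul_one_eq_diagonal]
      exact Matrix.PosDef.diagonal (fun i => hcpos)
    · show (-1 : ℝ) ≤ 1/(k:ℝ) * Real.log (((1/(k:ℝ))⁻¹ • (c • (1 : Matrix (Fin d) (Fin d) ℝ))).det)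
      have h1 : (1/(k:ℝ))⁻¹ • (c • (1 : Matrix (Fin d) (Fin d) ℝ))
          = ((1/(k:ℝ))⁻¹ * c) • (1 : Matrix (Fin d) (Fin d) ℝ) := smul_smul _ _ _
      have h2 : (1/(k:ℝ))⁻¹ * c = Real.exp (-(k:ℝ)/d) := by
        rw [hc]; field_simp
      have h3 : (((1/(k:ℝ))⁻¹ • (c • (1 : Matrix (Fin d) (Fin d) ℝ))).det)
          = Real.exp (-(k:ℝ)) := by
        rw [h1, h2, Matrix.det_smul, Matrix.det_one, Fintype.card_fin, mul_one,
          ← Real.exp_nat_mul]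
        congr 1
        field_simp
      rw [h3, Real.log_exp]
      have h4 : 1/(k:ℝ) * -(k:ℝ) = -1 := by field_simp
      rw [h4]
  have heq : wtight d k - q = ((0:ℝ), (0:ℝ), -(c • (1 : Matrix (Fin d) (Fin d) ℝ))) := by
    simp [wtight, hq, Prod.ext_iff]
  have htr : ((-(c • (1 : Matrix (Fin d) (Fin d) ℝ))) * (-(c • (1 : Matrix (Fin d) (Fin d) ℝ)))).trace
      = c^2 * d := by
    rw [neg_mul_neg, Matrix.smul_mul, Matrix.mul_smul, one_mul, smul_smul, Matrix.trace_smul,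
      Matrix.trace_one, Fintype.card_fin, smul_eq_mul]
    ring
  have hnrm : nrm (wtight d k - q) = c * Real.sqrt d := by
    rw [heq]
    simp only [nrm]
    rw [htr]
    have h1 : (0:ℝ) ^ 2 + (0:ℝ) ^ 2 + c^2 * (d:ℝ) = c^2 * d := by ring
    rw [h1]
    rw [Real.sqrt_mul (by positivity) (d:ℝ), Real.sqrt_sq hcpos.le]
  have hfinal : c * Real.sqrt d = Real.sqrt d / (k * Real.exp (k / d)) := by
    rw [hc, neg_div, Real.exp_neg]
    rw [div_mul_eq_mul_div, inv_mul_eq_div, div_div]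
    rw [mul_comm ((Real.exp ((k:ℝ)/d))) (k:ℝ)]
  calc sdist (wtight d k) (Klogdet d) ≤ nrm (wtight d k - q) := sdist_le hqmem
    _ = Real.sqrt d / (k * Real.exp (k / d)) := by rw [hnrm, hfinal]

/-- Remark 3.3 (tightness of the log-type error bound for `F_s`, `n_y = 0`): along
`w^k = (-1, 1/k, 0)` one has `⟨w^k, n⟩ = 0`, `dist(w^k, F_s) = 1/k`,
`0 < dist(w^k, K_logdet) ≤ √d/(k e^{k/d})`, and
`liminf_k dist(w^k, F_s) / g_log(dist(w^k, K_logdet)) ≥ 1/(2d)`. -/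
theorem stmt_15 (d : ℕ) (hd : 2 ≤ d)
    (nZ : Matrix (Fin d) (Fin d) ℝ) (hnZ : nZ.PosSemidef)
    (hrank_pos : 0 < nZ.rank) (hrank_lt : nZ.rank < d) :
    (∀ k : ℕ, 1 ≤ k →
      ip (wtight d k) ((0, 0, nZ) : E d) = 0 ∧
      sdist (wtight d k) (Fs d nZ) = 1 / k ∧
      0 < sdist (wtight d k) (Klogdet d) ∧
      sdist (wtight d k) (Klogdet d) ≤ Real.sqrt d / (k * Real.exp (k / d))) ∧
    1 / (2 * (d : ℝ)) ≤ liminf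
      (fun k : ℕ => sdist (wtight d k) (Fs d nZ) / glog (sdist (wtight d k) (Klogdet d)))
      atTop := by
  have hd2 : (2:ℝ) ≤ (d:ℝ) := by exact_mod_cast hd
  have hdpos : (0:ℝ) < d := by linarith
  have hts : ∀ k : ℕ, 1 ≤ k →
      Real.exp (-(3 * (k:ℝ))) / (k * d) ≤ sdist (wtight d k) (Klogdet d) :=
    fun k hk => le_sdist ⟨_, klogdet_nonempty d⟩ (fun s hs => klogdet_lb d k hd hk s hs)
  constructor
  · intro k hk
    have hk1 : (1:ℝ) ≤ (k:ℝ) := by exact_mod_cast hk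
    have hkpos : (0:ℝ) < k := by linarith
    refine ⟨?_, sdist_fs d k hk nZ, ?_, sdist_klogdet_ub d k hd hk⟩
    · simp [ip, wtight]
    · have hε0 : 0 < Real.exp (-(3 * (k:ℝ))) / (k * d) := by positivity
      exact lt_of_lt_of_le hε0 (hts k hk)
  · have hcb : ∀ᶠ k : ℕ in atTop,
        sdist (wtight d k) (Fs d nZ) / glog (sdist (wtight d k) (Klogdet d)) ≤ 3 + d := by
      filter_upwards [eventually_ge_atTop 1] with k hk
      have hk1 : (1:ℝ) ≤ (k:ℝ) := by exact_mod_cast hk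
      have hkpos : (0:ℝ) < k := by linarith
      set ε := Real.exp (-(3 * (k:ℝ))) / (k * d) with hε
      have hε0 : 0 < ε := by positivity
      have hεe2 : ε ≤ Real.exp (-2) := by
        have h1 : ε ≤ Real.exp (-(3*(k:ℝ))) := by
          rw [hε, div_le_iff₀ (by positivity)]
          nlinarith [mul_nonneg (by nlinarith : (0:ℝ) ≤ (k:ℝ)*d - 1)
            (Real.exp_pos (-(3*(k:ℝ)))).le]
        have h2 : Real.exp (-(3*(k:ℝ))) ≤ Real.exp (-2) :=
          Real.exp_le_exp.mpr (by linarith)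
        linarith
      have ht0 : 0 < sdist (wtight d k) (Klogdet d) := lt_of_lt_of_le hε0 (hts k hk)
      have hgt : glog ε ≤ glog (sdist (wtight d k) (Klogdet d)) := glog_mono hε0 (hts k hk)
      have hgε : 0 < glog ε := glog_pos hε0
      rw [sdist_fs d k hk nZ]
      have step1 : 1/(k:ℝ) / glog (sdist (wtight d k) (Klogdet d)) ≤ (1/(k:ℝ)) / glog ε := by
        gcongr
      have hlogε : Real.log ε = -(3*(k:ℝ)) - Real.log ((k:ℝ)*d) := by
        rw [hε, Real.log_div (Real.exp_ne_zero _) (by positivity), Real.log_exp]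
      have hlogkd : Real.log ((k:ℝ)*d) ≤ (k:ℝ)*d := by
        have := Real.log_le_sub_one_of_pos (x := (k:ℝ)*d) (by positivity); linarith
      have hlogkd0 : 0 ≤ Real.log ((k:ℝ)*d) := Real.log_nonneg (by nlinarith)
      have step2 : (1/(k:ℝ)) / glog ε = (1/(k:ℝ)) * (-Real.log ε) := by
        rw [glog_eq hε0 hεe2, div_div_eq_mul_div, div_one]
      have hkinv : (1/(k:ℝ)) * (k:ℝ) = 1 := by field_simp
      have step3 : (1/(k:ℝ)) * (-Real.log ε) ≤ 3 + d := by
        rw [hlogε]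
        have h3 : -((-(3*(k:ℝ))) - Real.log ((k:ℝ)*d)) = 3*(k:ℝ) + Real.log ((k:ℝ)*d) := by
          ring
        rw [h3]
        have hkinvpos : 0 < 1/(k:ℝ) := by positivity
        nlinarith
      linarith
    have hlb : ∀ᶠ k : ℕ in atTop, 1/(2*(d:ℝ)) ≤
        sdist (wtight d k) (Fs d nZ) / glog (sdist (wtight d k) (Klogdet d)) := by
      filter_upwards [eventually_ge_atTop (4*d)] with k hk
      have hk' : 1 ≤ k := by omega
      have hk4d : (4*(d:ℝ)) ≤ (k:ℝ) := by exact_mod_cast hk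
      have hk1 : (1:ℝ) ≤ (k:ℝ) := by linarith
      have hkpos : (0:ℝ) < k := by linarith
      set u := Real.sqrt d / ((k:ℝ) * Real.exp ((k:ℝ)/d)) with hu
      have hsqd_pos : 0 < Real.sqrt d := Real.sqrt_pos.mpr hdpos
      have hu0 : 0 < u := by positivity
      have htu : sdist (wtight d k) (Klogdet d) ≤ u := sdist_klogdet_ub d k hd hk'
      have hε0 : 0 < Real.exp (-(3 * (k:ℝ))) / (k * d) := by positivity
      have ht0 : 0 < sdist (wtight d k) (Klogdet d) := lt_of_lt_of_le hε0 (hts k hk')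
      have hsqd : Real.sqrt d ≤ (d:ℝ) := by
        nlinarith [Real.sq_sqrt hdpos.le, Real.sqrt_nonneg (d:ℝ)]
      have hkd4 : (4:ℝ) ≤ (k:ℝ)/d := by
        rw [le_div_iff₀ hdpos]; linarith
      have hue2 : u ≤ Real.exp (-2) := by
        rw [hu, div_le_iff₀ (by positivity)]
        have h1 : Real.exp (-2) * ((k:ℝ) * Real.exp ((k:ℝ)/d))
            = (k:ℝ) * Real.exp ((k:ℝ)/d - 2) := by
          rw [mul_comm (Real.exp (-2)), mul_assoc, ← Real.exp_add]
          ring_nf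
        rw [h1]
        have h2 : (1:ℝ) ≤ Real.exp ((k:ℝ)/d - 2) := Real.one_le_exp (by linarith)
        nlinarith
      have hgtu : glog (sdist (wtight d k) (Klogdet d)) ≤ glog u := glog_mono ht0 htu
      have hgt0 : 0 < glog (sdist (wtight d k) (Klogdet d)) := glog_pos ht0
      rw [sdist_fs d k hk' nZ]
      have hlogu : -Real.log u = Real.log (k:ℝ) + (k:ℝ)/d - Real.log (Real.sqrt d) := by
        rw [hu, Real.log_div (ne_of_gt hsqd_pos) (by positivity),
          Real.log_mul (by positivity) (Real.exp_ne_zero _), Real.log_exp]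
        ring
      have hloglog : Real.log (Real.sqrt d) ≤ Real.log (k:ℝ) :=
        Real.log_le_log hsqd_pos (by linarith)
      have hlogu_ge : (k:ℝ)/d ≤ -Real.log u := by rw [hlogu]; linarith
      have step1 : (1/(k:ℝ)) / glog u ≤ 1/(k:ℝ) / glog (sdist (wtight d k) (Klogdet d)) := by
        gcongr
      have step2 : (1/(k:ℝ))/glog u = (1/(k:ℝ)) * (-Real.log u) := by
        rw [glog_eq hu0 hue2, div_div_eq_mul_div, div_one]
      have step3 : 1/(2*(d:ℝ)) ≤ (1/(k:ℝ)) * (-Real.log u) := by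
        have h5 : (1/(k:ℝ)) * ((k:ℝ)/d) = 1/(d:ℝ) := by field_simp
        have h6 : (1/(k:ℝ)) * ((k:ℝ)/d) ≤ (1/(k:ℝ)) * (-Real.log u) :=
          mul_le_mul_of_nonneg_left hlogu_ge (by positivity)
        have h7 : 1/(2*(d:ℝ)) ≤ 1/(d:ℝ) :=
          one_div_le_one_div_of_le hdpos (by linarith)
        linarith [h5 ▸ h6]
      linarith
    exact le_liminf_of_le (isCoboundedUnder_ge_of_eventually_le atTop hcb) hlb
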